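/- Let R be an operator on V⊗V satisfying the braid equation R₁₂R₂₃R₁₂ = R₂₃R₁₂R₂₃. Then for α any scalar, the operator P_α = (R₁₂−α)(R₂₃R₁₂−αR₂₃+α²) satisfies P_α = (R₂₃−α)(R₁₂R₂₃−αR₁₂+α²) = (R₂₃R₁₂−αR₁₂+α²)(R₂₃−α) = (R₁₂R₂₃−αR₂₃+α²)(R₁₂−α). -/
import Mathlib


open TensorProduct

variable {k : Type*} [Field k] {V : Type*} [AddCommGroup V] [Module k V]

/-- The operator `R ⊗ id` acting on `V ⊗ V ⊗ V` (associated as `V ⊗ (V ⊗ V)`). -/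
noncomputable def R₁₂ (R : Module.End k (V ⊗[k] V)) :
    Module.End k (V ⊗[k] (V ⊗[k] V)) :=
  (TensorProduct.assoc k V V V).toLinearMap ∘ₗ
    TensorProduct.map R LinearMap.id ∘ₗ (TensorProduct.assoc k V V V).symm.toLinearMap

/-- The operator `id ⊗ R` acting on `V ⊗ V ⊗ V`. -/
noncomputable def R₂₃ (R : Module.End k (V ⊗[k] V)) :
    Module.End k (V ⊗[k] (V ⊗[k] V)) :=
  TensorProduct.map LinearMap.id R

lemma aux_braid {S : Type*} [Ring S] {k : Type*} [Field k] [Algebra k S]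
    (A B : S) (h : A * B * A = B * A * B) (α : k) :
    (A - α • 1) * (B * A - α • B + α ^ 2 • 1) = (B - α • 1) * (A * B - α • A + α ^ 2 • 1) ∧
    (A - α • 1) * (B * A - α • B + α ^ 2 • 1) = (B * A - α • A + α ^ 2 • 1) * (B - α • 1) ∧
    (A - α • 1) * (B * A - α • B + α ^ 2 • 1) = (A * B - α • B + α ^ 2 • 1) * (A - α • 1) := by
  have h' : A * (B * A) = B * (A * B) := by rw [← mul_assoc, ← mul_assoc, h]
  refine ⟨?_, ?_, ?_⟩ <;>
  · simp only [mul_add, add_mul, mul_sub, sub_mul, smul_mul_assoc, mul_smul_comm,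
      mul_one, one_mul, mul_assoc, h']
    module

theorem stmt_2 (R : Module.End k (V ⊗[k] V))
    (hbraid : R₁₂ R * R₂₃ R * R₁₂ R = R₂₃ R * R₁₂ R * R₂₃ R) (α : k) :
    (R₁₂ R - α • 1) * (R₂₃ R * R₁₂ R - α • R₂₃ R + α ^ 2 • 1) =
        (R₂₃ R - α • 1) * (R₁₂ R * R₂₃ R - α • R₁₂ R + α ^ 2 • 1) ∧
      (R₁₂ R - α • 1) * (R₂₃ R * R₁₂ R - α • R₂₃ R + α ^ 2 • 1) =
        (R₂₃ R * R₁₂ R - α • R₁₂ R + α ^ 2 • 1) * (R₂₃ R - α • 1) ∧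
      (R₁₂ R - α • 1) * (R₂₃ R * R₁₂ R - α • R₂₃ R + α ^ 2 • 1) =
        (R₁₂ R * R₂₃ R - α • R₂₃ R + α ^ 2 • 1) * (R₁₂ R - α • 1) := by
  exact aux_braid (R₁₂ R) (R₂₃ R) hbraid α
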